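/- Let F be a random variable with E[exp(λF)] < ∞ for all λ ≥ 0, and suppose that for every λ ≥ 0 the entropy bound Ent(e^{λF}) ≤ (λ²σ²/2)·E[e^{λF}] holds, where Ent(g) = E[g ln g] − E[g] ln E[g]. Then for all r ≥ 0, P(F − E[F] ≥ r) ≤ exp(−r²/(2σ²)). -/

import Mathlib

open MeasureTheory Real Filter Set Topology

lemma herbst_pos {Ω : Type*} [MeasurableSpace Ω] (P : Measure Ω)
    [IsProbabilityMeasure P] (F : Ω → ℝ)
    (hInt : ∀ l : ℝ, 0 ≤ l → Integrable (fun ω => Real.exp (l * F ω)) P)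
    {t : ℝ} (ht : 0 ≤ t) : 0 < ∫ ω, Real.exp (t * F ω) ∂P := by
  rw [integral_pos_iff_support_of_nonneg (fun ω => (Real.exp_pos _).le) (hInt t ht)]
  have : Function.support (fun ω => Real.exp (t * F ω)) = Set.univ := by
    ext ω; simp [Function.mem_support, (Real.exp_pos _).ne']
  simp [this]

lemma herbst_hasDerivAt {Ω : Type*} [MeasurableSpace Ω] (P : Measure Ω)
    [IsProbabilityMeasure P] (F : Ω → ℝ) (hFm : Measurable F)
    (hInt : ∀ l : ℝ, 0 ≤ l → Integrable (fun ω => Real.exp (l * F ω)) P)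
    (hInt' : ∀ l : ℝ, 0 ≤ l → Integrable (fun ω => F ω * Real.exp (l * F ω)) P)
    {l : ℝ} (hl : 0 < l) :
    HasDerivAt (fun t => ∫ ω, Real.exp (t * F ω) ∂P)
      (∫ ω, F ω * Real.exp (l * F ω) ∂P) l := by
  have habs : ∀ c : ℝ, 0 ≤ c → Integrable (fun ω => |F ω| * Real.exp (c * F ω)) P := by
    intro c hc
    refine ((hInt' c hc).abs).congr (Eventually.of_forall fun ω => ?_)
    simp only [abs_mul, abs_of_pos (Real.exp_pos _)]
  have key := hasDerivAt_integral_of_dominated_loc_of_deriv_le (μ := P)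
    (x₀ := l) (s := Metric.ball l (l / 2)) (F := fun t ω => Real.exp (t * F ω))
    (F' := fun t ω => F ω * Real.exp (t * F ω))
    (bound := fun ω => |F ω| * Real.exp ((l / 2) * F ω) + |F ω| * Real.exp ((3 * l / 2) * F ω))
    (Metric.ball_mem_nhds l (half_pos hl))
    (Eventually.of_forall fun x => ((hFm.const_mul x).exp).aestronglyMeasurable)
    (hInt l hl.le)
    ((hFm.mul ((hFm.const_mul l).exp)).aestronglyMeasurable)
    ?_ ?_ ?_
  · exact key.2
  · refine Eventually.of_forall fun ω => fun x hx => ?_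
    rw [Metric.mem_ball, Real.dist_eq, abs_lt] at hx
    have h1 : l / 2 ≤ x := by linarith [hx.1]
    have h2 : x ≤ 3 * l / 2 := by linarith [hx.2]
    have : ‖F ω * Real.exp (x * F ω)‖ = |F ω| * Real.exp (x * F ω) := by
      rw [Real.norm_eq_abs, abs_mul, abs_of_pos (Real.exp_pos _)]
    rw [this]
    rcases le_or_gt 0 (F ω) with hF | hF
    · have : Real.exp (x * F ω) ≤ Real.exp ((3 * l / 2) * F ω) :=
        Real.exp_le_exp.2 (mul_le_mul_of_nonneg_right h2 hF)
      nlinarith [abs_nonneg (F ω), Real.exp_pos ((l / 2) * F ω)]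
    · have : Real.exp (x * F ω) ≤ Real.exp ((l / 2) * F ω) :=
        Real.exp_le_exp.2 (by nlinarith)
      nlinarith [abs_nonneg (F ω), Real.exp_pos ((3 * l / 2) * F ω)]
  · exact (habs (l / 2) (by positivity)).add (habs (3 * l / 2) (by positivity))
  · refine Eventually.of_forall fun ω => fun x _ => ?_
    have := (hasDerivAt_mul_const (F ω) (x := x)).exp
    simpa [mul_comm] using this


lemma herbst_tendsto {Ω : Type*} [MeasurableSpace Ω] (P : Measure Ω)
    [IsProbabilityMeasure P] (F : Ω → ℝ) (hFm : Measurable F) (hFint : Integrable F P)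
    (hInt : ∀ l : ℝ, 0 ≤ l → Integrable (fun ω => Real.exp (l * F ω)) P) :
    Tendsto (fun a => ∫ ω, (Real.exp (a * F ω) - 1) / a ∂P) (𝓝[>] (0:ℝ))
      (𝓝 (∫ ω, F ω ∂P)) := by
  refine tendsto_integral_filter_of_dominated_convergence
    (fun ω => |F ω| + Real.exp (F ω)) ?_ ?_ ?_ ?_
  · exact Eventually.of_forall fun a =>
      (((hFm.const_mul a).exp.sub measurable_const).div_const a).aestronglyMeasurable
  · refine Filter.eventually_of_mem (Ioc_mem_nhdsGT one_pos) fun a ha => ?_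
    refine Eventually.of_forall fun ω => ?_
    set x := F ω
    have ha0 : 0 < a := ha.1
    have ha1 : a ≤ 1 := ha.2
    have hlow : x ≤ (Real.exp (a * x) - 1) / a := by
      rw [le_div_iff₀ ha0]
      have := Real.add_one_le_exp (a * x)
      linarith
    have hup : (Real.exp (a * x) - 1) / a ≤ Real.exp x - 1 := by
      rw [div_le_iff₀ ha0]
      have hconv := convexOn_exp.2 (Set.mem_univ x) (Set.mem_univ (0:ℝ)) ha0.le
        (by linarith : (0:ℝ) ≤ 1 - a) (by ring)
      simp only [smul_eq_mul, mul_zero, add_zero, Real.exp_zero, mul_one] at hconv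
      nlinarith
    show ‖(Real.exp (a * x) - 1) / a‖ ≤ |x| + Real.exp x
    rw [Real.norm_eq_abs, abs_le]
    constructor
    · have : -|x| ≤ x := neg_abs_le x
      have := Real.exp_pos x
      linarith
    · have : x ≤ |x| := le_abs_self x
      linarith [Real.exp_pos x, abs_nonneg x]
  · refine hFint.abs.add (((hInt 1 zero_le_one).congr (Eventually.of_forall fun ω => ?_)))
    simp
  · refine Eventually.of_forall fun ω => ?_
    have hd : HasDerivAt (fun a : ℝ => Real.exp (a * F ω)) (F ω) 0 := by
      simpa using (hasDerivAt_mul_const (F ω) (x := (0:ℝ))).exp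
    have := hasDerivAt_iff_tendsto_slope.1 hd
    refine (this.mono_left (nhdsWithin_mono _ ?_)).congr fun a => ?_
    · exact fun y hy => ne_of_gt hy
    · simp [slope_def_field, div_eq_inv_mul]

lemma herbst_key {Ω : Type*} [MeasurableSpace Ω] (P : Measure Ω)
    [IsProbabilityMeasure P] (F : Ω → ℝ) (hFm : Measurable F) (hFint : Integrable F P)
    (σ : ℝ) (hσ : 0 < σ)
    (hInt : ∀ l : ℝ, 0 ≤ l → Integrable (fun ω => Real.exp (l * F ω)) P)
    (hInt' : ∀ l : ℝ, 0 ≤ l → Integrable (fun ω => F ω * Real.exp (l * F ω)) P)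
    (hEnt : ∀ l : ℝ, 0 ≤ l →
      (∫ ω, Real.exp (l * F ω) * Real.log (Real.exp (l * F ω)) ∂P)
          - (∫ ω, Real.exp (l * F ω) ∂P) * Real.log (∫ ω, Real.exp (l * F ω) ∂P)
        ≤ (l ^ 2 * σ ^ 2 / 2) * ∫ ω, Real.exp (l * F ω) ∂P)
    {l : ℝ} (hl : 0 < l) :
    Real.log (∫ ω, Real.exp (l * F ω) ∂P)
      ≤ l * (∫ ω, F ω ∂P) + σ ^ 2 / 2 * l ^ 2 := by
  set M : ℝ → ℝ := fun t => ∫ ω, Real.exp (t * F ω) ∂P with hM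
  set M' : ℝ → ℝ := fun t => ∫ ω, F ω * Real.exp (t * F ω) ∂P with hM'
  have hMpos : ∀ t : ℝ, 0 ≤ t → 0 < M t := fun t ht => herbst_pos P F hInt ht
  -- rephrase the entropy bound
  have hEnt2 : ∀ t : ℝ, 0 < t → t * M' t - M t * Real.log (M t) ≤ t ^ 2 * σ ^ 2 / 2 * M t := by
    intro t ht
    have := hEnt t ht.le
    have heq : (∫ ω, Real.exp (t * F ω) * Real.log (Real.exp (t * F ω)) ∂P) = t * M' t := by
      rw [hM']
      rw [← integral_const_mul]
      congr 1; funext ω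
      rw [Real.log_exp]; ring
    rw [heq] at this
    exact this
  -- the function g
  set g : ℝ → ℝ := fun t => Real.log (M t) / t - σ ^ 2 / 2 * t with hg
  have hgderiv : ∀ t ∈ Ioi (0:ℝ), HasDerivAt g
      ((M' t / M t * t - Real.log (M t) * 1) / t ^ 2 - σ ^ 2 / 2) t := by
    intro t ht
    have h1 : HasDerivAt M (M' t) t := herbst_hasDerivAt P F hFm hInt hInt' ht
    have h2 : HasDerivAt (fun s => Real.log (M s)) (M' t / M t) t :=
      h1.log (hMpos t (le_of_lt ht)).ne'
    have h3 : HasDerivAt (fun s => Real.log (M s) / s)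
        ((M' t / M t * t - Real.log (M t) * 1) / t ^ 2) t :=
      h2.div (hasDerivAt_id t) (ne_of_gt ht)
    have h4 : HasDerivAt (fun s : ℝ => σ ^ 2 / 2 * s) (σ ^ 2 / 2) t := by
      simpa using (hasDerivAt_id t).const_mul (σ ^ 2 / 2)
    exact h3.sub h4
  have hganti : AntitoneOn g (Ioi (0:ℝ)) := by
    apply antitoneOn_of_deriv_nonpos (convex_Ioi 0)
    · intro t ht
      exact ((hgderiv t ht).differentiableAt).continuousAt.continuousWithinAt
    · intro t ht
      rw [interior_Ioi] at ht
      exact ((hgderiv t ht).differentiableAt).differentiableWithinAt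
    · intro t ht
      rw [interior_Ioi] at ht
      rw [(hgderiv t ht).deriv]
      have htp : (0:ℝ) < t := ht
      have hMt := hMpos t htp.le
      have hent := hEnt2 t htp
      rw [sub_nonpos, div_le_iff₀ (by positivity : (0:ℝ) < t ^ 2)]
      rw [div_mul_eq_mul_div, div_sub' hMt.ne', div_le_iff₀ hMt]
      nlinarith
  -- g l ≤ E[F] via the limit
  have hEF : g l ≤ ∫ ω, F ω ∂P := by
    have htd := herbst_tendsto P F hFm hFint hInt
    refine ge_of_tendsto htd ?_
    have hmem : Ioo (0:ℝ) l ∈ 𝓝[>] (0:ℝ) := Ioo_mem_nhdsGT_of_mem ⟨le_refl 0, hl⟩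
    refine Filter.eventually_of_mem hmem fun a ha => ?_
    have ha0 : 0 < a := ha.1
    have hal : a < l := ha.2
    have h1 : g l ≤ g a := hganti ha0 hl hal.le
    have h2 : g a ≤ Real.log (M a) / a := by
      have : 0 ≤ σ ^ 2 / 2 * a := by positivity
      simp only [hg]; linarith
    have h3 : Real.log (M a) / a ≤ (M a - 1) / a := by
      have := Real.log_le_sub_one_of_pos (hMpos a ha0.le)
      exact div_le_div_of_nonneg_right this ha0.le
    have h4 : (M a - 1) / a = ∫ ω, (Real.exp (a * F ω) - 1) / a ∂P := by
      rw [integral_div]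
      congr 1
      rw [integral_sub (hInt a ha0.le) (integrable_const 1)]
      simp [hM]
    show g l ≤ ∫ ω, (Real.exp (a * F ω) - 1) / a ∂P
    rw [← h4]
    exact h1.trans (h2.trans h3)
  -- conclude
  have : Real.log (M l) / l - σ ^ 2 / 2 * l ≤ ∫ ω, F ω ∂P := hEF
  have hll : 0 < l := hl
  rw [div_sub' hll.ne'] at this
  rw [div_le_iff₀ hll] at this
  nlinarith

/-- Herbst argument: a uniform entropy bound along exponential moments implies Gaussian
concentration: `P(F − E[F] ≥ r) ≤ exp(−r²/(2σ²))`. -/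
theorem herbst_argument {Ω : Type*} [MeasurableSpace Ω] (P : Measure Ω)
    [IsProbabilityMeasure P] (F : Ω → ℝ) (hFm : Measurable F) (hFint : Integrable F P)
    (σ : ℝ) (hσ : 0 < σ)
    (hInt : ∀ l : ℝ, 0 ≤ l → Integrable (fun ω => Real.exp (l * F ω)) P)
    (hInt' : ∀ l : ℝ, 0 ≤ l → Integrable (fun ω => F ω * Real.exp (l * F ω)) P)
    (hEnt : ∀ l : ℝ, 0 ≤ l →
      (∫ ω, Real.exp (l * F ω) * Real.log (Real.exp (l * F ω)) ∂P)
          - (∫ ω, Real.exp (l * F ω) ∂P) * Real.log (∫ ω, Real.exp (l * F ω) ∂P)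
        ≤ (l ^ 2 * σ ^ 2 / 2) * ∫ ω, Real.exp (l * F ω) ∂P)
    (r : ℝ) (hr : 0 ≤ r) :
    (P {ω | F ω - (∫ ω', F ω' ∂P) ≥ r}).toReal ≤ Real.exp (-r ^ 2 / (2 * σ ^ 2)) := by
  rcases eq_or_lt_of_le hr with hr0 | hr0
  · -- r = 0 : bound by 1
    have h1 : (P {ω | F ω - (∫ ω', F ω' ∂P) ≥ r}).toReal ≤ 1 := by
      rw [← ENNReal.toReal_one]
      exact ENNReal.toReal_mono ENNReal.one_ne_top prob_le_one
    have : Real.exp (-r ^ 2 / (2 * σ ^ 2)) = 1 := by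
      rw [← hr0]; norm_num
    rw [this]; exact h1
  · set EF := ∫ ω', F ω' ∂P with hEF
    set l : ℝ := r / σ ^ 2 with hldef
    have hl : 0 < l := by positivity
    set c : ℝ := Real.exp (l * (r + EF)) with hc
    have hcpos : 0 < c := Real.exp_pos _
    have hsub : {ω | F ω - EF ≥ r} ⊆ {ω | c ≤ Real.exp (l * F ω)} := by
      intro ω hω
      simp only [Set.mem_setOf_eq] at hω ⊢
      rw [hc]
      apply Real.exp_le_exp.2
      have : r + EF ≤ F ω := by linarith
      exact mul_le_mul_of_nonneg_left this hl.le
    have hmarkov := mul_meas_ge_le_integral_of_nonneg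
      (Eventually.of_forall fun ω => (Real.exp_pos (l * F ω)).le) (hInt l hl.le) c
    have hmono : (P {ω | F ω - EF ≥ r}).toReal ≤ (P {ω | c ≤ Real.exp (l * F ω)}).toReal :=
      ENNReal.toReal_mono (measure_ne_top P _) (measure_mono hsub)
    have hkey := herbst_key P F hFm hFint σ hσ hInt hInt' hEnt hl
    have hMl : (∫ ω, Real.exp (l * F ω) ∂P) ≤ Real.exp (l * EF + σ ^ 2 / 2 * l ^ 2) := by
      have hMpos := herbst_pos P F hInt hl.le
      rw [← Real.exp_log hMpos]
      exact Real.exp_le_exp.2 (by rw [hEF]; exact hkey)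
    have h2 : (P {ω | c ≤ Real.exp (l * F ω)}).toReal
        ≤ Real.exp (l * EF + σ ^ 2 / 2 * l ^ 2) / c := by
      rw [le_div_iff₀ hcpos]
      calc (P {ω | c ≤ Real.exp (l * F ω)}).toReal * c
          = c * (P {ω | c ≤ Real.exp (l * F ω)}).toReal := by ring
        _ ≤ ∫ ω, Real.exp (l * F ω) ∂P := hmarkov
        _ ≤ _ := hMl
    have h3 : Real.exp (l * EF + σ ^ 2 / 2 * l ^ 2) / c = Real.exp (-r ^ 2 / (2 * σ ^ 2)) := by
      rw [hc, ← Real.exp_sub]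
      congr 1
      rw [hldef]
      field_simp
      ring
    calc (P {ω | F ω - EF ≥ r}).toReal
        ≤ (P {ω | c ≤ Real.exp (l * F ω)}).toReal := hmono
      _ ≤ Real.exp (l * EF + σ ^ 2 / 2 * l ^ 2) / c := h2
      _ = Real.exp (-r ^ 2 / (2 * σ ^ 2)) := h3
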